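/- Let k be an algebraically closed field of characteristic different from 2, V a finite-dimensional k-vector space, ε ∈ {1, -1}, and B a nondegenerate ε-symmetric bilinear form on V. Let x be a nilpotent linear endomorphism of V satisfying B(x v, w) + B(v, x w) = 0 for all v, w ∈ V. Then there exist finitely many subspaces V^(1), …, V^(m) of V and pairwise distinct positive integers s₁ > s₂ > ⋯ > s_m such that: (i) the V^(i) form an internal direct sum equal to V; (ii) each V^(i) is x-invariant; (iii) the V^(i) are pairwise B-orthogonal, i.e. B(v, w) = 0 for v ∈ V^(i), w ∈ V^(j), i ≠ j; (iv) the restriction of B to each V^(i) is nondegenerate; and (v) on each V^(i), x has all Jordan blocks of size exactly s_i, i.e. x^{s_i} vanishes on V^(i) and s_i · dim(ker x ∩ V^(i)) = dim V^(i). -/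

import Mathlib

namespace NOJD

variable {k : Type*} [Field k] {V : Type*} [AddCommGroup V] [Module k V]

def NondegOn (B : V →ₗ[k] V →ₗ[k] k) (T : Submodule k V) : Prop :=
  ∀ v ∈ T, (∀ w ∈ T, B v w = 0) → v = 0

theorem sign_pair (B : V →ₗ[k] V →ₗ[k] k) (x : V →ₗ[k] V)
    (hskew : ∀ v w : V, B (x v) w + B v (x w) = 0) :
    ∀ (n : ℕ) (u u' : V), B u ((x ^ n) u') = (-1 : k) ^ n * B ((x ^ n) u) u' := by
  intro n
  induction n with
  | zero => intro u u'; simp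
  | succ n ih =>
    intro u u'
    have h1 : (x ^ (n + 1)) u' = (x ^ n) (x u') := by
      rw [pow_succ, Module.End.mul_apply]
    have h2 : (x ^ (n + 1)) u = x ((x ^ n) u) := by
      rw [pow_succ', Module.End.mul_apply]
    rw [h1, ih u (x u'), h2]
    have := hskew ((x ^ n) u) u'
    have hx : B ((x ^ n) u) (x u') = -B (x ((x ^ n) u)) u' := by linear_combination this
    rw [hx]
    ring

theorem pow_mem (x : V →ₗ[k] V) (T : Submodule k V) (hxT : ∀ v ∈ T, x v ∈ T) :
    ∀ (n : ℕ) (v : V), v ∈ T → (x ^ n) v ∈ T := by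
  intro n
  induction n with
  | zero => intro v hv; simpa using hv
  | succ n ih =>
    intro v hv
    have : (x ^ (n + 1)) v = x ((x ^ n) v) := by rw [pow_succ', Module.End.mul_apply]
    rw [this]; exact hxT _ (ih v hv)

theorem pow_zero_of_ge (x : V →ₗ[k] V) (T : Submodule k V) (s : ℕ)
    (hxs : ∀ v ∈ T, (x ^ s) v = 0) :
    ∀ (n : ℕ), s ≤ n → ∀ v ∈ T, (x ^ n) v = 0 := by
  intro n hn v hv
  have : x ^ n = x ^ (n - s) * x ^ s := by rw [← pow_add]; congr 1; omega
  rw [this, Module.End.mul_apply, hxs v hv, map_zero]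

theorem block_exists [FiniteDimensional k V] (B : V →ₗ[k] V →ₗ[k] k) (x : V →ₗ[k] V)
    (hskew : ∀ v w : V, B (x v) w + B v (x w) = 0)
    (T : Submodule k V) (hxT : ∀ v ∈ T, x v ∈ T)
    (s : ℕ) (hs : 0 < s) (hxs : ∀ v ∈ T, (x ^ s) v = 0)
    (r : ℕ) (g : Fin r → V) (hg : ∀ t, g t ∈ T)
    (hindep : ∀ c : Fin r → k,
      (∀ t' : Fin r, (∑ t, c t * B ((x ^ (s - 1)) (g t)) (g t')) = 0) → c = 0) :
    ∃ U : Submodule k V, U ≤ T ∧ (∀ v ∈ U, x v ∈ U) ∧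
      Module.finrank k U = r * s ∧
      NondegOn B U ∧
      Module.finrank k (LinearMap.ker x ⊓ U : Submodule k V) = r := by
  classical
  set gens : Fin r × Fin s → V := fun p => (x ^ (p.2 : ℕ)) (g p.1) with hgens
  set U : Submodule k V := Submodule.span k (Set.range gens) with hU
  -- composition of powers
  have hcomp : ∀ (i j : ℕ) (v : V), (x ^ j) ((x ^ i) v) = (x ^ (j + i)) v := by
    intro i j v
    rw [pow_add, Module.End.mul_apply]
  have hsucc : ∀ (n : ℕ) (v : V), (x ^ (n + 1)) v = x ((x ^ n) v) := by
    intro n v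
    rw [pow_succ', Module.End.mul_apply]
  -- pairing vanishing in high degree
  have hpair0 : ∀ (i j : ℕ) (u u' : V), u ∈ T → s ≤ i + j →
      B ((x ^ i) u) ((x ^ j) u') = 0 := by
    intro i j u u' hu hij
    rw [sign_pair B x hskew j ((x ^ i) u) u', hcomp,
      pow_zero_of_ge x T s hxs (j + i) (by omega) u hu]
    simp
  -- pairing in degree s - 1
  have hpair1 : ∀ (i j : ℕ) (u u' : V), i + j = s - 1 →
      B ((x ^ i) u) ((x ^ j) u') = (-1 : k) ^ j * B ((x ^ (s - 1)) u) u' := by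
    intro i j u u' hij
    rw [sign_pair B x hskew j ((x ^ i) u) u', hcomp, show j + i = s - 1 by omega]
  -- expansion of B applied to a linear combination
  have expand : ∀ (a : Fin r × Fin s → k) (w : V),
      B (∑ p, a p • gens p) w = ∑ p, a p * B (gens p) w := by
    intro a w
    simp [map_sum, LinearMap.sum_apply, map_smul, LinearMap.smul_apply, smul_eq_mul]
  -- the single-step extraction
  have hstep : ∀ (a : Fin r × Fin s → k) (d : ℕ), d < s →
      (∀ (t : Fin r) (i : Fin s), (i : ℕ) < d → a (t, i) = 0) →
      (∀ t' : Fin r, B (∑ p, a p • gens p) ((x ^ (s - 1 - d)) (g t')) = 0) →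
      ∀ (t : Fin r) (i : Fin s), (i : ℕ) = d → a (t, i) = 0 := by
    intro a d hd IH hvan t i hi
    set d₀ : Fin s := ⟨d, hd⟩ with hd₀
    have e1 : ∀ t' : Fin r,
        ∑ p : Fin r × Fin s, a p * B (gens p) ((x ^ (s - 1 - d)) (g t')) =
        (-1 : k) ^ (s - 1 - d) * ∑ t₁, a (t₁, d₀) * B ((x ^ (s - 1)) (g t₁)) (g t') := by
      intro t'
      rw [Fintype.sum_prod_type, Finset.mul_sum]
      apply Finset.sum_congr rfl
      intro t₁ _
      have hterm : ∀ i2 : Fin s, a (t₁, i2) * B (gens (t₁, i2)) ((x ^ (s - 1 - d)) (g t')) =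
          if i2 = d₀ then (-1 : k) ^ (s - 1 - d) *
            (a (t₁, d₀) * B ((x ^ (s - 1)) (g t₁)) (g t')) else 0 := by
        intro i2
        by_cases h2 : i2 = d₀
        · subst h2
          rw [if_pos rfl]
          have : gens (t₁, d₀) = (x ^ d) (g t₁) := rfl
          rw [this, hpair1 d (s - 1 - d) (g t₁) (g t') (by omega)]
          ring
        · rw [if_neg h2]
          have h2' : (i2 : ℕ) ≠ d := by
            intro hcon
            exact h2 (Fin.ext hcon)
          rcases lt_or_gt_of_ne h2' with hlt | hgt
          · rw [IH t₁ i2 hlt, zero_mul]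
          · have : gens (t₁, i2) = (x ^ (i2 : ℕ)) (g t₁) := rfl
            rw [this, hpair0 (i2 : ℕ) (s - 1 - d) (g t₁) (g t') (hg t₁) (by omega), mul_zero]
      rw [Finset.sum_congr rfl (fun i2 _ => hterm i2)]
      rw [Finset.sum_ite_eq' Finset.univ d₀
        (fun _ => (-1 : k) ^ (s - 1 - d) * (a (t₁, d₀) * B ((x ^ (s - 1)) (g t₁)) (g t')))]
      simp [Finset.mul_sum]
    have e2 : ∀ t' : Fin r, ∑ t₁, a (t₁, d₀) * B ((x ^ (s - 1)) (g t₁)) (g t') = 0 := by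
      intro t'
      have h0 := hvan t'
      rw [expand, e1 t'] at h0
      have hne : ((-1 : k) ^ (s - 1 - d)) ≠ 0 := pow_ne_zero _ (by norm_num)
      exact (mul_eq_zero.mp h0).resolve_left hne
    have := hindep (fun t₁ => a (t₁, d₀)) e2
    have heq : i = d₀ := Fin.ext hi
    rw [heq]
    exact congrFun this t
  -- the main claim: orthogonality to all generators kills coefficients
  have hclaim : ∀ a : Fin r × Fin s → k,
      (∀ (t' : Fin r) (j : ℕ), j < s → B (∑ p, a p • gens p) ((x ^ j) (g t')) = 0) →
      a = 0 := by
    intro a ha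
    have hall : ∀ d (t : Fin r) (i : Fin s), (i : ℕ) = d → a (t, i) = 0 := by
      intro d
      induction d using Nat.strong_induction_on with
      | _ d IHd =>
        intro t i hi
        have hd : d < s := hi ▸ i.isLt
        refine hstep a d hd (fun t2 i2 h2 => IHd (i2 : ℕ) h2 t2 i2 rfl) ?_ t i hi
        intro t'
        exact ha t' (s - 1 - d) (by omega)
    funext p
    exact hall (p.2 : ℕ) p.1 p.2 rfl
  -- linear independence of the generators
  have hli : LinearIndependent k gens := by
    rw [Fintype.linearIndependent_iff]
    intro f hf
    have hf0 : f = 0 := by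
      apply hclaim
      intro t' j hj
      rw [hf]
      simp
    exact fun i => congrFun hf0 i
  have hUle : U ≤ T := by
    rw [hU]
    apply Submodule.span_le.mpr
    rintro v ⟨p, rfl⟩
    exact pow_mem x T hxT _ _ (hg p.1)
  have hgen_mem : ∀ p : Fin r × Fin s, gens p ∈ U := fun p =>
    Submodule.subset_span ⟨p, rfl⟩
  have hxU : ∀ v ∈ U, x v ∈ U := by
    have hle : U ≤ Submodule.comap x U := by
      rw [hU]
      apply Submodule.span_le.mpr
      rintro v ⟨⟨t, i⟩, rfl⟩
      simp only [SetLike.mem_coe, Submodule.mem_comap]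
      have hx1 : x (gens (t, i)) = (x ^ ((i : ℕ) + 1)) (g t) := (hsucc (i : ℕ) (g t)).symm
      by_cases hlt : (i : ℕ) + 1 < s
      · rw [hx1]
        exact hgen_mem (t, ⟨(i : ℕ) + 1, hlt⟩)
      · have hes : (i : ℕ) + 1 = s := by have := i.isLt; omega
        rw [hx1, hes, hxs (g t) (hg t)]
        exact Submodule.zero_mem _
    exact fun v hv => hle hv
  have hrank : Module.finrank k ↥U = r * s := by
    rw [hU, finrank_span_eq_card hli, Fintype.card_prod, Fintype.card_fin, Fintype.card_fin]
  have hnd : NondegOn B U := by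
    intro v hv hvw
    obtain ⟨a, ha⟩ := (Submodule.mem_span_range_iff_exists_fun k).mp (hU ▸ hv)
    have ha0 : a = 0 := by
      apply hclaim
      intro t' j hj
      rw [ha]
      exact hvw _ (hgen_mem (t', ⟨j, hj⟩))
    rw [← ha, ha0]
    simp
  -- the kernel piece
  set K₀ : Submodule k V :=
    Submodule.span k (Set.range fun t : Fin r => (x ^ (s - 1)) (g t)) with hK₀
  have hKli : LinearIndependent k (fun t : Fin r => (x ^ (s - 1)) (g t)) := by
    rw [Fintype.linearIndependent_iff]
    intro c hc
    have hz : ∀ t' : Fin r, ∑ t, c t * B ((x ^ (s - 1)) (g t)) (g t') = 0 := by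
      intro t'
      have h1 : B (∑ t, c t • (x ^ (s - 1)) (g t)) (g t') = 0 := by rw [hc]; simp
      rw [map_sum, LinearMap.sum_apply] at h1
      simpa [map_smul, smul_eq_mul] using h1
    have hc0 := hindep c hz
    exact fun i => congrFun hc0 i
  have hK0r : Module.finrank k ↥K₀ = r := by
    rw [hK₀, finrank_span_eq_card hKli, Fintype.card_fin]
  have hker : LinearMap.ker x ⊓ U = K₀ := by
    apply le_antisymm
    · intro v hv
      obtain ⟨hvk, hvU⟩ := Submodule.mem_inf.mp hv
      obtain ⟨a, ha⟩ := (Submodule.mem_span_range_iff_exists_fun k).mp (hU ▸ hvU)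
      have hxv : x v = 0 := LinearMap.mem_ker.mp hvk
      have hvanish : ∀ (t' : Fin r) (j : ℕ), 1 ≤ j → B v ((x ^ j) (g t')) = 0 := by
        intro t' j hj
        have hxj : (x ^ j) (g t') = x ((x ^ (j - 1)) (g t')) := by
          have h9 := hsucc (j - 1) (g t')
          rw [show j - 1 + 1 = j by omega] at h9
          exact h9
        rw [hxj]
        have h2 := hskew v ((x ^ (j - 1)) (g t'))
        rw [hxv] at h2
        simpa using h2
      have hall : ∀ d, d < s - 1 → ∀ (t : Fin r) (i : Fin s), (i : ℕ) = d → a (t, i) = 0 := by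
        intro d
        induction d using Nat.strong_induction_on with
        | _ d IHd =>
          intro hd t i hi
          refine hstep a d (by omega)
            (fun t2 i2 h2 => IHd (i2 : ℕ) h2 (by omega) t2 i2 rfl) ?_ t i hi
          intro t'
          rw [ha]
          exact hvanish t' (s - 1 - d) (by omega)
      rw [← ha]
      apply Submodule.sum_mem
      intro p _
      by_cases hp : (p.2 : ℕ) = s - 1
      · apply Submodule.smul_mem
        apply Submodule.subset_span
        refine ⟨p.1, ?_⟩
        show (x ^ (s - 1)) (g p.1) = gens p
        rw [hgens]
        simp only []
        rw [hp]
      · have ha0 : a p = 0 := hall (p.2 : ℕ) (by have := p.2.isLt; omega) p.1 p.2 rfl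
        rw [ha0, zero_smul]
        exact Submodule.zero_mem _
    · apply le_inf
      · rw [hK₀]
        apply Submodule.span_le.mpr
        rintro v ⟨t, rfl⟩
        simp only [SetLike.mem_coe, LinearMap.mem_ker]
        rw [← hsucc (s - 1) (g t), show (s - 1) + 1 = s by omega]
        exact hxs (g t) (hg t)
      · rw [hK₀]
        apply Submodule.span_le.mpr
        rintro v ⟨t, rfl⟩
        exact hgen_mem (t, ⟨s - 1, by omega⟩)
  refine ⟨U, hUle, hxU, hrank, hnd, ?_⟩
  rw [hker, hK0r]


theorem finrank_sup_disjoint [FiniteDimensional k V] (A A' : Submodule k V)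
    (hd : Disjoint A A') :
    Module.finrank k ↥(A ⊔ A') = Module.finrank k ↥A + Module.finrank k ↥A' := by
  have h := Submodule.finrank_sup_add_finrank_inf_eq A A'
  rw [hd.eq_bot] at h
  simp only [finrank_bot, add_zero] at h
  omega

theorem ker_inf_sup (x : V →ₗ[k] V) (A A' : Submodule k V)
    (hA : ∀ v ∈ A, x v ∈ A) (hA' : ∀ v ∈ A', x v ∈ A') (hd : Disjoint A A') :
    LinearMap.ker x ⊓ (A ⊔ A') = (LinearMap.ker x ⊓ A) ⊔ (LinearMap.ker x ⊓ A') := by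
  apply le_antisymm
  · intro v hv
    obtain ⟨hvk, hvs⟩ := Submodule.mem_inf.mp hv
    obtain ⟨a, ha, b, hb, rfl⟩ := Submodule.mem_sup.mp hvs
    have hx0 : x a + x b = 0 := by
      have : x (a + b) = 0 := LinearMap.mem_ker.mp hvk
      rwa [map_add] at this
    have hxa : x a ∈ A ⊓ A' := by
      refine Submodule.mem_inf.mpr ⟨hA a ha, ?_⟩
      rw [eq_neg_of_add_eq_zero_left hx0]
      exact Submodule.neg_mem _ (hA' b hb)
    have hxa0 : x a = 0 := by
      have := hd.eq_bot ▸ hxa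
      simpa using this
    have hxb0 : x b = 0 := by
      rw [hxa0, zero_add] at hx0
      exact hx0
    exact Submodule.add_mem _
      (Submodule.mem_sup_left (Submodule.mem_inf.mpr ⟨LinearMap.mem_ker.mpr hxa0, ha⟩))
      (Submodule.mem_sup_right (Submodule.mem_inf.mpr ⟨LinearMap.mem_ker.mpr hxb0, hb⟩))
  · apply sup_le
    · exact le_inf inf_le_left (inf_le_right.trans le_sup_left)
    · exact le_inf inf_le_left (inf_le_right.trans le_sup_right)

theorem orth_compl [FiniteDimensional k V] (B : V →ₗ[k] V →ₗ[k] k)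
    (hBrefl : ∀ a b : V, B a b = 0 → B b a = 0)
    (x : V →ₗ[k] V)
    (hskew : ∀ v w : V, B (x v) w + B v (x w) = 0)
    (T U : Submodule k V) (hUT : U ≤ T)
    (hxT : ∀ v ∈ T, x v ∈ T) (hxU : ∀ v ∈ U, x v ∈ U)
    (hTnd : NondegOn B T) (hUnd : NondegOn B U) :
    Disjoint U (T ⊓ LinearMap.BilinForm.orthogonal B U) ∧
    U ⊔ (T ⊓ LinearMap.BilinForm.orthogonal B U) = T ∧
    (∀ v ∈ T ⊓ LinearMap.BilinForm.orthogonal B U,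
      x v ∈ T ⊓ LinearMap.BilinForm.orthogonal B U) ∧
    NondegOn B (T ⊓ LinearMap.BilinForm.orthogonal B U) ∧
    Module.finrank k ↥U + Module.finrank k ↥(T ⊓ LinearMap.BilinForm.orthogonal B U) =
      Module.finrank k ↥T := by
  have hrefl : LinearMap.BilinForm.IsRefl B := fun a b => hBrefl a b
  have hrestr : (LinearMap.BilinForm.restrict B U).Nondegenerate := by
    refine (LinearMap.IsRefl.nondegenerate_iff_separatingLeft (B := LinearMap.BilinForm.restrict B U)
      (fun a b h => hrefl a b h)).mpr ?_
    intro m hm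
    have : (m : V) = 0 := hUnd m.1 m.2 (fun w hw => hm ⟨w, hw⟩)
    exact Subtype.ext this
  have hcompl := LinearMap.BilinForm.isCompl_orthogonal_of_restrict_nondegenerate hrefl hrestr
  have hdisj : Disjoint U (T ⊓ LinearMap.BilinForm.orthogonal B U) :=
    hcompl.disjoint.mono_right inf_le_right
  have hsup : U ⊔ (T ⊓ LinearMap.BilinForm.orthogonal B U) = T := by
    have h1 := sup_inf_assoc_of_le (LinearMap.BilinForm.orthogonal B U) hUT
    rw [hcompl.sup_eq_top, top_inf_eq] at h1
    rw [inf_comm] at h1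
    exact h1.symm
  have hxT' : ∀ v ∈ T ⊓ LinearMap.BilinForm.orthogonal B U,
      x v ∈ T ⊓ LinearMap.BilinForm.orthogonal B U := by
    intro v hv
    obtain ⟨hvT, hvO⟩ := Submodule.mem_inf.mp hv
    refine Submodule.mem_inf.mpr ⟨hxT v hvT, ?_⟩
    intro n hn
    have h1 := hskew n v
    have h2 : B (x n) v = 0 := hvO (x n) (hxU n hn)
    show B n (x v) = 0
    linear_combination h1 - h2
  have hnd : NondegOn B (T ⊓ LinearMap.BilinForm.orthogonal B U) := by
    intro v hv hvw
    obtain ⟨hvT, hvO⟩ := Submodule.mem_inf.mp hv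
    apply hTnd v hvT
    intro w hw
    rw [← hsup] at hw
    obtain ⟨a, ha, b, hb, rfl⟩ := Submodule.mem_sup.mp hw
    have h1 : B v a = 0 := hBrefl a v (hvO a ha)
    have h2 : B v b = 0 := hvw b hb
    rw [map_add, h1, h2, add_zero]
  refine ⟨hdisj, hsup, hxT', hnd, ?_⟩
  have h := Submodule.finrank_sup_add_finrank_inf_eq U (T ⊓ LinearMap.BilinForm.orthogonal B U)
  rw [hsup, hdisj.eq_bot] at h
  simp only [finrank_bot, add_zero] at h
  omega

theorem layer_exists [FiniteDimensional k V] (B : V →ₗ[k] V →ₗ[k] k) (ε : k)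
    (hε : ε = 1 ∨ ε = -1) (hBsym : ∀ v w : V, B v w = ε * B w v)
    (x : V →ₗ[k] V)
    (hskew : ∀ v w : V, B (x v) w + B v (x w) = 0) :
    ∀ (N : ℕ) (T : Submodule k V), Module.finrank k ↥T ≤ N →
      (∀ v ∈ T, x v ∈ T) → NondegOn B T →
      ∀ s : ℕ, 0 < s → (∀ v ∈ T, (x ^ s) v = 0) →
      ∃ U : Submodule k V, U ≤ T ∧ (∀ v ∈ U, x v ∈ U) ∧ NondegOn B U ∧
        s * Module.finrank k ↥(LinearMap.ker x ⊓ U) = Module.finrank k ↥U ∧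
        (∀ v ∈ T, (∀ u ∈ U, B u v = 0) → (x ^ (s - 1)) v = 0) := by
  have hBrefl : ∀ a b : V, B a b = 0 → B b a = 0 := by
    intro a b hab
    have hε0 : ε ≠ 0 := by rcases hε with h | h <;> rw [h] <;> norm_num
    have := hBsym a b
    rw [hab] at this
    exact (mul_eq_zero.mp this.symm).resolve_left hε0
  intro N
  induction N using Nat.strong_induction_on with
  | _ N IHN =>
  intro T hTN hxT hTnd s hs hxs
  by_cases htriv : ∀ v ∈ T, (x ^ (s - 1)) v = 0
  · refine ⟨⊥, bot_le, by simp, ?_, by simp, fun v hv _ => htriv v hv⟩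
    intro v hv _
    simpa using hv
  · push_neg at htriv
    obtain ⟨v₀, hv₀T, hv₀⟩ := htriv
    have hw₀ : ∃ w₀ ∈ T, B ((x ^ (s - 1)) v₀) w₀ ≠ 0 := by
      by_contra hcon
      push_neg at hcon
      exact hv₀ (hTnd _ (pow_mem x T hxT _ _ hv₀T) hcon)
    obtain ⟨w₀, hw₀T, hBvw⟩ := hw₀
    have hgen : ∃ (r : ℕ) (g : Fin r → V), 0 < r ∧ (∀ t, g t ∈ T) ∧
        (∀ c : Fin r → k,
          (∀ t', (∑ t, c t * B ((x ^ (s - 1)) (g t)) (g t')) = 0) → c = 0) := by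
      by_cases haniso : ∃ v ∈ T, B ((x ^ (s - 1)) v) v ≠ 0
      · obtain ⟨v, hvT, hvv⟩ := haniso
        refine ⟨1, fun _ => v, one_pos, fun _ => hvT, ?_⟩
        intro c hc
        have h1 := hc 0
        rw [Fin.sum_univ_one] at h1
        have hc0 : c 0 = 0 := (mul_eq_zero.mp h1).resolve_right hvv
        funext t
        have ht : t = 0 := Subsingleton.elim _ _
        rw [ht, hc0]
        rfl
      · push_neg at haniso
        have hCsym : ∀ u w : V,
            B ((x ^ (s - 1)) u) w = (ε * (-1 : k) ^ (s - 1)) * B ((x ^ (s - 1)) w) u := by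
          intro u w
          rw [hBsym ((x ^ (s - 1)) u) w, sign_pair B x hskew (s - 1) w u]
          ring
        have hwv : B ((x ^ (s - 1)) w₀) v₀ ≠ 0 := by
          intro hcon
          apply hBvw
          rw [hCsym v₀ w₀, hcon, mul_zero]
        refine ⟨2, ![v₀, w₀], two_pos, ?_, ?_⟩
        · intro t
          fin_cases t
          · simpa using hv₀T
          · simpa using hw₀T
        · intro c hc
          have h0 := hc 0
          have h1 := hc 1
          rw [Fin.sum_univ_two] at h0 h1
          simp only [Matrix.cons_val_zero, Matrix.cons_val_one, Matrix.head_cons] at h0 h1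
          rw [haniso v₀ hv₀T] at h0
          rw [haniso w₀ hw₀T] at h1
          have hc1 : c 1 = 0 := by
            have h0' : c 1 * B ((x ^ (s - 1)) w₀) v₀ = 0 := by linear_combination h0
            exact (mul_eq_zero.mp h0').resolve_right hwv
          have hc0 : c 0 = 0 := by
            have h1' : c 0 * B ((x ^ (s - 1)) v₀) w₀ = 0 := by linear_combination h1
            exact (mul_eq_zero.mp h1').resolve_right hBvw
          funext t
          fin_cases t
          · simpa using hc0
          · simpa using hc1
    obtain ⟨r, g, hr, hgT, hindep⟩ := hgen
    obtain ⟨U₀, hU₀T, hxU₀, hU₀rank, hU₀nd, hU₀ker⟩ :=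
      block_exists B x hskew T hxT s hs hxs r g hgT hindep
    obtain ⟨hdisj, hsup, hxT', hT'nd, hrksum⟩ :=
      orth_compl B hBrefl x hskew T U₀ hU₀T hxT hxU₀ hTnd hU₀nd
    set T' := T ⊓ LinearMap.BilinForm.orthogonal B U₀ with hT'
    have hT'le : T' ≤ T := inf_le_left
    have hU₀pos : 0 < Module.finrank k ↥U₀ := by
      rw [hU₀rank]
      exact Nat.mul_pos hr hs
    have hT'rank : Module.finrank k ↥T' < N := by omega
    obtain ⟨U', hU'T', hxU', hU'nd, hU'ker, hU'last⟩ :=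
      IHN (Module.finrank k ↥T') hT'rank T' le_rfl hxT' hT'nd s hs
        (fun v hv => hxs v (hT'le hv))
    have hU'T : U' ≤ T := hU'T'.trans hT'le
    have hdisjU : Disjoint U₀ U' := hdisj.mono_right hU'T'
    refine ⟨U₀ ⊔ U', sup_le hU₀T hU'T, ?_, ?_, ?_, ?_⟩
    · intro v hv
      obtain ⟨a, ha, b, hb, rfl⟩ := Submodule.mem_sup.mp hv
      rw [map_add]
      exact Submodule.add_mem _ (Submodule.mem_sup_left (hxU₀ a ha))
        (Submodule.mem_sup_right (hxU' b hb))
    · intro v hv hvw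
      obtain ⟨a, ha, b, hb, rfl⟩ := Submodule.mem_sup.mp hv
      have hbO : b ∈ LinearMap.BilinForm.orthogonal B U₀ := (hU'T' hb).2
      have ha0 : a = 0 := by
        apply hU₀nd a ha
        intro w hw
        have h1 : B (a + b) w = 0 := hvw w (Submodule.mem_sup_left hw)
        have h2 : B b w = 0 := hBrefl w b (hbO w hw)
        rw [map_add, LinearMap.add_apply, h2] at h1
        simpa using h1
      subst ha0
      rw [zero_add] at hvw ⊢
      apply hU'nd b hb
      intro w hw
      exact hvw w (Submodule.mem_sup_right hw)
    · rw [ker_inf_sup x U₀ U' hxU₀ hxU' hdisjU,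
        finrank_sup_disjoint _ _ hdisjU,
        finrank_sup_disjoint _ _ (hdisjU.mono inf_le_right inf_le_right),
        Nat.mul_add, hU₀ker, hU'ker, hU₀rank, Nat.mul_comm s r]
    · intro v hvT hvorth
      have hvO : v ∈ LinearMap.BilinForm.orthogonal B U₀ := by
        intro n hn
        exact hvorth n (Submodule.mem_sup_left hn)
      exact hU'last v (Submodule.mem_inf.mpr ⟨hvT, hvO⟩)
        (fun u hu => hvorth u (Submodule.mem_sup_right hu))


theorem iSup_fin_cons {m : ℕ} (a : Submodule k V) (f : Fin m → Submodule k V) :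
    (⨆ i, (Fin.cons a f : Fin (m + 1) → Submodule k V) i) = a ⊔ ⨆ i, f i := by
  apply le_antisymm
  · apply iSup_le
    intro i
    rcases Fin.eq_zero_or_eq_succ i with rfl | ⟨j, rfl⟩
    · simp only [Fin.cons_zero]
      exact le_sup_left
    · simp only [Fin.cons_succ]
      exact le_trans (le_iSup f j) le_sup_right
  · apply sup_le
    · exact le_iSup (Fin.cons a f : Fin (m + 1) → Submodule k V) 0
    · apply iSup_le
      intro j
      have : f j = (Fin.cons a f : Fin (m + 1) → Submodule k V) j.succ := by
        simp
      rw [this]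
      exact le_iSup (Fin.cons a f : Fin (m + 1) → Submodule k V) j.succ

theorem iSupIndep_fin_cons {m : ℕ} (a b : Submodule k V) (f : Fin m → Submodule k V)
    (hd : Disjoint a b) (hf : ∀ i, f i ≤ b) (hind : iSupIndep f) :
    iSupIndep (Fin.cons a f : Fin (m + 1) → Submodule k V) := by
  intro i
  rcases Fin.eq_zero_or_eq_succ i with rfl | ⟨t, rfl⟩
  · refine hd.mono_right ?_
    apply iSup_le
    intro j
    apply iSup_le
    intro hj
    obtain ⟨j', rfl⟩ := Fin.eq_succ_of_ne_zero hj
    simpa using hf j'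
  · set R : Submodule k V := ⨆ j, ⨆ (_ : j ≠ t), f j with hR
    have hRb : R ≤ b := by
      apply iSup_le; intro j; apply iSup_le; intro _; exact hf j
    have hrest : (⨆ j, ⨆ (_ : j ≠ t.succ), (Fin.cons a f : Fin (m + 1) → Submodule k V) j)
        ≤ a ⊔ R := by
      apply iSup_le
      intro j
      apply iSup_le
      intro hj
      rcases Fin.eq_zero_or_eq_succ j with rfl | ⟨j', rfl⟩
      · simp only [Fin.cons_zero]
        exact le_sup_left
      · simp only [Fin.cons_succ]
        have hj' : j' ≠ t := by
          intro hcon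
          exact hj (by rw [hcon])
        have h6 : f j' ≤ R := le_iSup₂ (f := fun j (_ : j ≠ t) => f j) j' hj'
        exact le_trans h6 le_sup_right
    have h1 : (R ⊔ a) ⊓ b = R := by
      rw [sup_inf_assoc_of_le a hRb, hd.eq_bot, sup_bot_eq]
    have h2 : f t ⊓ (a ⊔ R) ≤ f t ⊓ R := by
      refine le_inf inf_le_left ?_
      have h3 : f t ⊓ (a ⊔ R) ≤ b ⊓ (a ⊔ R) := inf_le_inf_right _ (hf t)
      have h4 : b ⊓ (a ⊔ R) = R := by rw [inf_comm, sup_comm]; exact h1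
      exact h3.trans_eq h4
    have h5 : Disjoint (f t) (a ⊔ R) := by
      rw [disjoint_iff]
      exact le_antisymm (h2.trans (hind t).le_bot) bot_le
    simp only [Fin.cons_succ]
    exact h5.mono_right hrest

theorem strictAnti_fin_cons {m : ℕ} (s0 : ℕ) (sz : Fin m → ℕ) (h : StrictAnti sz)
    (hlt : ∀ j, sz j < s0) : StrictAnti (Fin.cons s0 sz : Fin (m + 1) → ℕ) := by
  intro i j hij
  rcases Fin.eq_zero_or_eq_succ j with rfl | ⟨j', rfl⟩
  · exact absurd hij (Fin.not_lt_zero i)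
  · rcases Fin.eq_zero_or_eq_succ i with rfl | ⟨i', rfl⟩
    · simpa using hlt j'
    · have hij' : i' < j' := by
        rwa [Fin.succ_lt_succ_iff] at hij
      simpa using h hij'

theorem decomp [FiniteDimensional k V] (B : V →ₗ[k] V →ₗ[k] k) (ε : k)
    (hε : ε = 1 ∨ ε = -1) (hBsym : ∀ v w : V, B v w = ε * B w v)
    (x : V →ₗ[k] V)
    (hskew : ∀ v w : V, B (x v) w + B v (x w) = 0) :
    ∀ (s : ℕ) (T : Submodule k V),
      (∀ v ∈ T, x v ∈ T) → NondegOn B T → (∀ v ∈ T, (x ^ s) v = 0) →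
      ∃ (m : ℕ) (W : Fin m → Submodule k V) (sz : Fin m → ℕ),
        StrictAnti sz ∧ (∀ i, 0 < sz i) ∧ (∀ i, sz i ≤ s) ∧ (∀ i, W i ≤ T) ∧
        iSupIndep W ∧ (⨆ i, W i) = T ∧
        (∀ i, ∀ v ∈ W i, x v ∈ W i) ∧
        (∀ i j, i ≠ j → ∀ v ∈ W i, ∀ w ∈ W j, B v w = 0) ∧
        (∀ i, NondegOn B (W i)) ∧
        (∀ i, ∀ v ∈ W i, (x ^ (sz i)) v = 0) ∧
        (∀ i, sz i * Module.finrank k ↥(LinearMap.ker x ⊓ W i) =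
          Module.finrank k ↥(W i)) := by
  have hBrefl : ∀ a b : V, B a b = 0 → B b a = 0 := by
    intro a b hab
    have hε0 : ε ≠ 0 := by rcases hε with h | h <;> rw [h] <;> norm_num
    have := hBsym a b
    rw [hab] at this
    exact (mul_eq_zero.mp this.symm).resolve_left hε0
  intro s
  induction s with
  | zero =>
    intro T hxT hTnd hxs
    have hT : T = ⊥ := by
      rw [eq_bot_iff]
      intro v hv
      have := hxs v hv
      simpa using this
    refine ⟨0, Fin.elim0, Fin.elim0, fun i => i.elim0, fun i => i.elim0, fun i => i.elim0,
      fun i => i.elim0, fun i => i.elim0, ?_, fun i => i.elim0, fun i => i.elim0,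
      fun i => i.elim0, fun i => i.elim0, fun i => i.elim0⟩
    rw [hT]
    exact iSup_of_empty _
  | succ s IH =>
    intro T hxT hTnd hxs
    obtain ⟨U, hUT, hxU, hUnd, hUker, hUlast⟩ :=
      layer_exists B ε hε hBsym x hskew (Module.finrank k ↥T) T le_rfl hxT hTnd
        (s + 1) (Nat.succ_pos s) hxs
    obtain ⟨hdisj, hsup, hxT', hT'nd, _⟩ :=
      orth_compl B hBrefl x hskew T U hUT hxT hxU hTnd hUnd
    set T' := T ⊓ LinearMap.BilinForm.orthogonal B U with hT'def
    have hT'le : T' ≤ T := inf_le_left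
    have hxsT' : ∀ v ∈ T', (x ^ s) v = 0 := by
      intro v hv
      have h1 := hUlast v (hT'le hv)
        (fun u hu => (Submodule.mem_inf.mp hv).2 u hu)
      simpa using h1
    obtain ⟨m, W, sz, hsa, hpos, hle, hWT', hindepW, hsupW, hxW, horth, hWnd, hWpow, hWker⟩ :=
      IH T' hxT' hT'nd hxsT'
    have hWT : ∀ i, W i ≤ T := fun i => (hWT' i).trans hT'le
    refine ⟨m + 1, Fin.cons U W, Fin.cons (s + 1) sz, ?_, ?_, ?_, ?_, ?_, ?_, ?_, ?_, ?_, ?_, ?_⟩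
    · exact strictAnti_fin_cons (s + 1) sz hsa (fun j => Nat.lt_succ_of_le (hle j))
    · intro i
      rcases Fin.eq_zero_or_eq_succ i with rfl | ⟨j, rfl⟩
      · simp
      · simpa using hpos j
    · intro i
      rcases Fin.eq_zero_or_eq_succ i with rfl | ⟨j, rfl⟩
      · simp
      · simpa using (hle j).trans (Nat.le_succ s)
    · intro i
      rcases Fin.eq_zero_or_eq_succ i with rfl | ⟨j, rfl⟩
      · simpa using hUT
      · simpa using hWT j
    · exact iSupIndep_fin_cons U T' W hdisj hWT' hindepW
    · rw [iSup_fin_cons, hsupW]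
      exact hsup
    · intro i
      rcases Fin.eq_zero_or_eq_succ i with rfl | ⟨j, rfl⟩
      · simpa using hxU
      · simpa using hxW j
    · intro i j hij
      rcases Fin.eq_zero_or_eq_succ i with rfl | ⟨i', rfl⟩
      · obtain ⟨j', rfl⟩ := Fin.eq_succ_of_ne_zero (Ne.symm hij)
        simp only [Fin.cons_zero, Fin.cons_succ]
        intro v hv w hw
        have hwO : w ∈ LinearMap.BilinForm.orthogonal B U := ((hWT' j') hw).2
        exact hwO v hv
      · rcases Fin.eq_zero_or_eq_succ j with rfl | ⟨j', rfl⟩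
        · simp only [Fin.cons_zero, Fin.cons_succ]
          intro v hv w hw
          have hvO : v ∈ LinearMap.BilinForm.orthogonal B U := ((hWT' i') hv).2
          exact hBrefl w v (hvO w hw)
        · simp only [Fin.cons_succ]
          have hij' : i' ≠ j' := by
            intro hcon
            exact hij (by rw [hcon])
          exact horth i' j' hij'
    · intro i
      rcases Fin.eq_zero_or_eq_succ i with rfl | ⟨j, rfl⟩
      · simpa using hUnd
      · simpa using hWnd j
    · intro i
      rcases Fin.eq_zero_or_eq_succ i with rfl | ⟨j, rfl⟩
      · simp only [Fin.cons_zero]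
        exact fun v hv => hxs v (hUT hv)
      · simpa using hWpow j
    · intro i
      rcases Fin.eq_zero_or_eq_succ i with rfl | ⟨j, rfl⟩
      · rw [Fin.cons_zero, Fin.cons_zero]; exact hUker
      · rw [Fin.cons_succ, Fin.cons_succ]; exact hWker j

end NOJD

/-- over an algebraically closed field of characteristic `≠ 2`, if `x` is a
nilpotent endomorphism of `(V, B)` (where `B` is nondegenerate and `ε`-symmetric) with
`B(xv, w) + B(v, xw) = 0`, then `V` decomposes as an orthogonal direct sum of `x`-invariant
subspaces `V⁽ⁱ⁾` on which `B` restricts nondegenerately and `x` acts with all Jordan blocks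
of a single size `sᵢ`, for pairwise distinct sizes `s₁ > s₂ > ⋯ > s_m`. -/
theorem nilpotent_orthogonal_jordan_decomposition
    {k : Type*} [Field k] [IsAlgClosed k] (hchar : (2 : k) ≠ 0)
    {V : Type*} [AddCommGroup V] [Module k V] [FiniteDimensional k V]
    (ε : k) (hε : ε = 1 ∨ ε = -1)
    (B : V →ₗ[k] V →ₗ[k] k)
    (hBnd : (∀ v : V, (∀ w : V, B v w = 0) → v = 0) ∧
            (∀ w : V, (∀ v : V, B v w = 0) → w = 0))
    (hBsym : ∀ v w : V, B v w = ε * B w v)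
    (x : V →ₗ[k] V) (hnil : IsNilpotent x)
    (hskew : ∀ v w : V, B (x v) w + B v (x w) = 0) :
    ∃ (m : ℕ) (W : Fin m → Submodule k V) (s : Fin m → ℕ),
      StrictAnti s ∧ (∀ i, 0 < s i) ∧
      DirectSum.IsInternal W ∧
      (∀ i, ∀ v ∈ W i, x v ∈ W i) ∧
      (∀ i j, i ≠ j → ∀ v ∈ W i, ∀ w ∈ W j, B v w = 0) ∧
      (∀ i, (∀ v ∈ W i, (∀ w ∈ W i, B v w = 0) → v = 0) ∧
            (∀ w ∈ W i, (∀ v ∈ W i, B v w = 0) → w = 0)) ∧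
      (∀ i, (∀ v ∈ W i, (x ^ (s i)) v = 0) ∧
            s i * Module.finrank k ↥(LinearMap.ker x ⊓ W i) = Module.finrank k ↥(W i)) := by
  obtain ⟨n, hn⟩ := hnil
  have hε0 : ε ≠ 0 := by rcases hε with h | h <;> rw [h] <;> norm_num
  have hTnd : NOJD.NondegOn B ⊤ := by
    intro v _ hv
    exact hBnd.1 v (fun w => hv w trivial)
  obtain ⟨m, W, sz, hsa, hpos, _, _, hindep, hsup, hxW, horth, hWnd, hWpow, hWker⟩ :=
    NOJD.decomp B ε hε hBsym x hskew n ⊤ (fun v _ => trivial) hTnd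
      (fun v _ => by rw [hn]; rfl)
  refine ⟨m, W, sz, hsa, hpos, ?_, hxW, horth, ?_, fun i => ⟨hWpow i, hWker i⟩⟩
  · rw [DirectSum.isInternal_submodule_iff_iSupIndep_and_iSup_eq_top]
    exact ⟨hindep, hsup⟩
  · intro i
    refine ⟨hWnd i, ?_⟩
    intro w hw hvw
    apply hWnd i w hw
    intro v hv
    have := hBsym w v
    rw [hvw v hv, mul_zero] at this
    exact this
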